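/- Let (X^a_t) for a in a finite set R be independent sequences of independent random variables bounded in [0,B], (ε^a_t) be previsible Bernoulli selection sequences with ∑_a ε^a_t ∈ {0,1}, S(t) = ∑_{s≤t} ∑_a ε^a_s (X^a_s − E[X^a_s]), T(t) = ∑_{s≤t} ∑_a ε^a_s, and φ a stopping time bounded by T+1 such that on {φ ≤ T} we have T(φ) ≥ n. Then for any δ > 0, P(S(φ) ≥ T(φ)·δ, φ ≤ T) ≤ exp(−2nδ²/B²). -/

import Mathlib

open MeasureTheory ProbabilityTheory

section AuxLemmas
open Real MeasureTheory

lemma core_ineq {p : ℝ} (hp0 : 0 ≤ p) (hp1 : p ≤ 1) (h : ℝ) :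
    1 - p + p * exp h ≤ exp (p * h + h ^ 2 / 8) := by
  -- D x = 1 - p + p * exp x > 0
  have hD : ∀ x : ℝ, 0 < 1 - p + p * exp x := by
    intro x
    rcases lt_or_eq_of_le hp1 with h1 | h1
    · have : 0 ≤ p * exp x := mul_nonneg hp0 (exp_pos x).le
      linarith
    · subst h1; simp [exp_pos]
  set φ : ℝ → ℝ := fun x => p * x + x ^ 2 / 8 - log (1 - p + p * exp x) with hφdef
  set g : ℝ → ℝ := fun x => p * exp x / (1 - p + p * exp x) with hgdef
  have hg01 : ∀ x, 0 ≤ g x ∧ g x ≤ 1 := by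
    intro x
    constructor
    · exact div_nonneg (mul_nonneg hp0 (exp_pos x).le) (hD x).le
    · rw [div_le_one (hD x)]; linarith
  have hgderiv : ∀ x, HasDerivAt g (g x * (1 - g x)) x := by
    intro x
    have hu : HasDerivAt (fun x => p * exp x) (p * exp x) x := (hasDerivAt_exp x).const_mul p
    have hv : HasDerivAt (fun x => 1 - p + p * exp x) (p * exp x) x := hu.const_add _
    have := hu.div hv (hD x).ne'
    refine this.congr_deriv ?_
    have hDx := hD x
    show _ = (p * exp x / (1 - p + p * exp x)) * (1 - p * exp x / (1 - p + p * exp x))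
    field_simp
  have hψderiv : ∀ x, HasDerivAt (fun x => p + x / 4 - g x) (1 / 4 - g x * (1 - g x)) x := by
    intro x
    have : HasDerivAt (fun x : ℝ => p + x / 4) (1 / 4) x := by
      simpa using ((hasDerivAt_id x).div_const 4).const_add p
    exact this.sub (hgderiv x)
  have hψmono : Monotone (fun x => p + x / 4 - g x) := by
    apply monotone_of_deriv_nonneg
    · exact fun x => (hψderiv x).differentiableAt
    · intro x
      rw [(hψderiv x).deriv]
      nlinarith [(hg01 x).1, (hg01 x).2, sq_nonneg (1 - 2 * g x)]
  have hψ0 : p + (0:ℝ) / 4 - g 0 = 0 := by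
    have : g 0 = p := by
      simp only [hgdef, exp_zero, mul_one]
      rw [show (1 : ℝ) - p + p = 1 by ring, div_one]
    rw [this]; ring
  have hφderiv : ∀ x, HasDerivAt φ (p + x / 4 - g x) x := by
    intro x
    have hu : HasDerivAt (fun x => p * exp x) (p * exp x) x := (hasDerivAt_exp x).const_mul p
    have hv : HasDerivAt (fun x => 1 - p + p * exp x) (p * exp x) x := hu.const_add _
    have hlog : HasDerivAt (fun x => log (1 - p + p * exp x))
        (p * exp x / (1 - p + p * exp x)) x := hv.log (hD x).ne'
    have hpoly : HasDerivAt (fun x : ℝ => p * x + x ^ 2 / 8) (p + x / 4) x := by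
      have h1 : HasDerivAt (fun x : ℝ => p * x) p x := by
        simpa using (hasDerivAt_id x).const_mul p
      have h2 : HasDerivAt (fun x : ℝ => x ^ 2 / 8) (x / 4) x := by
        have := (hasDerivAt_pow 2 x).div_const 8
        simpa [mul_comm] using this.congr_deriv (by ring)
      exact h1.add h2
    exact hpoly.sub hlog
  have hφdiff : Differentiable ℝ φ := fun x => (hφderiv x).differentiableAt
  have hφ0 : φ 0 = 0 := by
    simp only [hφdef, exp_zero, mul_one, mul_zero]
    norm_num [show (1 : ℝ) - p + p = 1 by ring]
  have key : ∀ x : ℝ, 0 ≤ φ x := by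
    intro x
    rcases le_total 0 x with hx | hx
    · have hmono : MonotoneOn φ (Set.Ici (0:ℝ)) := by
        apply monotoneOn_of_deriv_nonneg (convex_Ici 0) hφdiff.continuous.continuousOn
          hφdiff.differentiableOn
        intro y hy
        rw [interior_Ici] at hy
        rw [(hφderiv y).deriv]
        have := hψmono (le_of_lt (Set.mem_Ioi.mp hy) : (0:ℝ) ≤ y)
        simpa [hψ0] using (hψ0 ▸ this : (0:ℝ) ≤ p + y / 4 - g y)
      have := hmono (Set.mem_Ici.mpr le_rfl) (Set.mem_Ici.mpr hx) hx
      linarith [hφ0 ▸ this]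
    · have hanti : AntitoneOn φ (Set.Iic (0:ℝ)) := by
        apply antitoneOn_of_deriv_nonpos (convex_Iic 0) hφdiff.continuous.continuousOn
          hφdiff.differentiableOn
        intro y hy
        rw [interior_Iic] at hy
        rw [(hφderiv y).deriv]
        have h2 : p + y / 4 - g y ≤ p + 0 / 4 - g 0 :=
          hψmono (le_of_lt (Set.mem_Iio.mp hy) : y ≤ (0:ℝ))
        linarith [hψ0]
      have := hanti (Set.mem_Iic.mpr hx) (Set.mem_Iic.mpr le_rfl) hx
      linarith [hφ0 ▸ this]
  have hlogle : log (1 - p + p * exp h) ≤ p * h + h ^ 2 / 8 := by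
    have := key h
    simp only [hφdef] at this
    linarith
  calc 1 - p + p * exp h = exp (log (1 - p + p * exp h)) := (exp_log (hD h)).symm
    _ ≤ exp (p * h + h ^ 2 / 8) := exp_le_exp.mpr hlogle

lemma hoeffding_mgf {Ω : Type*} {m : MeasurableSpace Ω} (P : Measure Ω)
    [IsProbabilityMeasure P] {B : ℝ} (hB : 0 < B) {X : Ω → ℝ} (hX : Measurable X)
    (hb : ∀ ω, X ω ∈ Set.Icc (0:ℝ) B) (l : ℝ) :
    ∫ ω, exp (l * (X ω - ∫ ω', X ω' ∂P)) ∂P ≤ exp (l ^ 2 * B ^ 2 / 8) := by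
  set μ := ∫ ω', X ω' ∂P with hμ
  have hXint : Integrable X P := by
    refine (integrable_const B).mono' hX.aestronglyMeasurable (ae_of_all _ fun ω => ?_)
    rw [Real.norm_eq_abs, abs_of_nonneg (hb ω).1]; exact (hb ω).2
  have hμ0 : 0 ≤ μ := integral_nonneg fun ω => (hb ω).1
  have hμB : μ ≤ B := by
    calc μ ≤ ∫ _, B ∂P := integral_mono hXint (integrable_const B) fun ω => (hb ω).2
    _ = B := by simp
  set p := μ / B with hp
  have hp0 : 0 ≤ p := div_nonneg hμ0 hB.le
  have hp1 : p ≤ 1 := div_le_one_of_le₀ hμB hB.le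
  -- pointwise convexity bound
  have hpt : ∀ ω, exp (l * X ω) ≤ 1 + X ω * ((exp (l * B) - 1) / B) := by
    intro ω
    have ht0 : 0 ≤ X ω / B := div_nonneg (hb ω).1 hB.le
    have ht1 : X ω / B ≤ 1 := div_le_one_of_le₀ (hb ω).2 hB.le
    have hc := convexOn_exp.2 (Set.mem_univ (0:ℝ)) (Set.mem_univ (l * B))
      (by linarith : (0:ℝ) ≤ 1 - X ω / B) ht0 (by ring)
    simp only [smul_eq_mul, mul_zero, zero_add, exp_zero, mul_one] at hc
    have harg : X ω / B * (l * B) = l * X ω := by field_simp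
    rw [harg] at hc
    have heq : 1 - X ω / B + X ω / B * exp (l * B)
        = 1 + X ω * ((exp (l * B) - 1) / B) := by field_simp; ring
    linarith
  have hexpint : Integrable (fun ω => exp (l * X ω)) P := by
    refine (integrable_const (exp (|l| * B))).mono'
      ((hX.const_mul l).exp).aestronglyMeasurable (ae_of_all _ fun ω => ?_)
    rw [Real.norm_eq_abs, abs_of_nonneg (exp_pos _).le]
    apply exp_le_exp.mpr
    calc l * X ω ≤ |l| * X ω := mul_le_mul_of_nonneg_right (le_abs_self l) (hb ω).1
    _ ≤ |l| * B := mul_le_mul_of_nonneg_left (hb ω).2 (abs_nonneg l)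
  have hint_le : ∫ ω, exp (l * X ω) ∂P ≤ 1 - p + p * exp (l * B) := by
    have hrhs : Integrable (fun ω => 1 + X ω * ((exp (l * B) - 1) / B)) P :=
      (integrable_const 1).add (hXint.mul_const _)
    calc ∫ ω, exp (l * X ω) ∂P ≤ ∫ ω, (1 + X ω * ((exp (l * B) - 1) / B)) ∂P :=
      integral_mono hexpint hrhs hpt
    _ = 1 + μ * ((exp (l * B) - 1) / B) := by
      rw [integral_add (integrable_const 1) (hXint.mul_const _), integral_mul_const]
      simp [hμ]
    _ = 1 - p + p * exp (l * B) := by rw [hp]; ring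
  have hfinal : 1 - p + p * exp (l * B) ≤ exp (l * μ + l ^ 2 * B ^ 2 / 8) := by
    have := core_ineq hp0 hp1 (l * B)
    have harg : p * (l * B) + (l * B) ^ 2 / 8 = l * μ + l ^ 2 * B ^ 2 / 8 := by
      rw [hp, show μ / B * (l * B) = l * μ by field_simp]; ring
    rwa [harg] at this
  calc ∫ ω, exp (l * (X ω - μ)) ∂P = ∫ ω, exp (l * X ω) * exp (-(l * μ)) ∂P := by
        congr 1; ext ω; rw [← exp_add]; ring_nf
  _ = (∫ ω, exp (l * X ω) ∂P) * exp (-(l * μ)) := integral_mul_const _ _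
  _ ≤ (1 - p + p * exp (l * B)) * exp (-(l * μ)) := by
      apply mul_le_mul_of_nonneg_right hint_le (exp_pos _).le
  _ ≤ exp (l * μ + l ^ 2 * B ^ 2 / 8) * exp (-(l * μ)) := by
      apply mul_le_mul_of_nonneg_right hfinal (exp_pos _).le
  _ = exp (l ^ 2 * B ^ 2 / 8) := by rw [← exp_add]; ring_nf

lemma sum01_eq_zero {R : Type*} [Fintype R] {f : R → ℝ} (h : ∀ a, f a = 0 ∨ f a = 1)
    (hs : (∑ a, f a) = 0) : ∀ a, f a = 0 := by
  have hnn : ∀ a ∈ Finset.univ, (0:ℝ) ≤ f a := fun a _ => by rcases h a with h'|h' <;> simp [h']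
  intro a
  exact (Finset.sum_eq_zero_iff_of_nonneg hnn).mp hs a (Finset.mem_univ a)

lemma sum01_eq_one {R : Type*} [Fintype R] [DecidableEq R] {f : R → ℝ} (h : ∀ a, f a = 0 ∨ f a = 1)
    (hs : (∑ a, f a) = 1) : ∃ b, f b = 1 ∧ ∀ a, a ≠ b → f a = 0 := by
  have hnn : ∀ a ∈ Finset.univ, (0:ℝ) ≤ f a := fun a _ => by rcases h a with h'|h' <;> simp [h']
  by_cases hex : ∃ b, f b = 1
  · obtain ⟨b, hb⟩ := hex
    refine ⟨b, hb, fun a ha => ?_⟩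
    have h0 : (∑ x ∈ Finset.univ.erase b, f x) = 0 := by
      have h1 := Finset.add_sum_erase Finset.univ f (Finset.mem_univ b)
      rw [hb] at h1
      rw [← h1] at hs
      linarith
    exact (Finset.sum_eq_zero_iff_of_nonneg
      (fun x _ => hnn x (Finset.mem_univ x))).mp h0 a (Finset.mem_erase.mpr ⟨ha, Finset.mem_univ a⟩)
  · push_neg at hex
    have : ∀ a, f a = 0 := fun a => (h a).resolve_right (hex a)
    rw [Finset.sum_congr rfl fun a _ => this a] at hs
    simp at hs

lemma stoppedProcess_natCoe_apply {Ω β : Type*} (u : ℕ → Ω → β) (φ : Ω → ℕ) (t : ℕ) (ω : Ω) :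
    stoppedProcess u (fun ω => (φ ω : WithTop ℕ)) t ω = u (min t (φ ω)) ω := rfl

end AuxLemmas

open Real

/-- Concentration bound with stopping time: let `(X a t)` for `a` in a finite set `R` be
independent sequences of independent random variables bounded in `[0, B]`, `(ε a t)` be
previsible `{0,1}`-valued selection sequences with at most one source selected per round,
`S t = ∑_{1 ≤ s ≤ t} ∑_a ε a s * (X a s - E[X a s])`, `N t = ∑_{1 ≤ s ≤ t} ∑_a ε a s`,
and `φ` a stopping time bounded by `T + 1` such that `φ ≤ T` implies `N φ ≥ n`.
Then for any `δ > 0`, `P(S φ ≥ N φ * δ and φ ≤ T) ≤ exp (-2 n δ² / B²)`. -/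
theorem stmt_10 {Ω : Type*} {m : MeasurableSpace Ω} (P : Measure Ω)
    [IsProbabilityMeasure P] (F : Filtration ℕ m)
    {R : Type*} [Fintype R]
    (B : ℝ) (hB : 0 < B)
    (X : R → ℕ → Ω → ℝ)
    (hXbound : ∀ a t ω, X a t ω ∈ Set.Icc (0 : ℝ) B)
    (hXadapted : ∀ a t, Measurable[F t] (X a t))
    (hXindep : ∀ a s t, t < s →
      Indep (MeasurableSpace.comap (X a s) (inferInstance : MeasurableSpace ℝ)) (F t) P)
    (hXfam : ∀ a, iIndepFun (X a) P)
    (ε : R → ℕ → Ω → ℝ)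
    (hεval : ∀ a t ω, ε a t ω = 0 ∨ ε a t ω = 1)
    (hεprev : ∀ a t, Measurable[F (t - 1)] (ε a t))
    (hεsum : ∀ t ω, (∑ a, ε a t ω) = 0 ∨ (∑ a, ε a t ω) = 1)
    (S N : ℕ → Ω → ℝ)
    (hS : ∀ t ω, S t ω =
      ∑ s ∈ Finset.Icc 1 t, ∑ a, ε a s ω * (X a s ω - ∫ ω', X a s ω' ∂P))
    (hN : ∀ t ω, N t ω = ∑ s ∈ Finset.Icc 1 t, ∑ a, ε a s ω)
    (T n : ℕ) (hn : 0 < n) (δ : ℝ) (hδ : 0 < δ)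
    (φ : Ω → ℕ) (hφ : IsStoppingTime F (fun ω => (φ ω : WithTop ℕ)))
    (hφle : ∀ ω, φ ω ≤ T + 1)
    (hφN : ∀ ω, φ ω ≤ T → (n : ℝ) ≤ N (φ ω) ω) :
    P {ω | N (φ ω) ω * δ ≤ S (φ ω) ω ∧ φ ω ≤ T}
      ≤ ENNReal.ofReal (Real.exp (-2 * n * δ ^ 2 / B ^ 2)) := by
  classical
  have hB2 : (0:ℝ) < B ^ 2 := by positivity
  set l : ℝ := 4 * δ / B ^ 2 with hl
  set c : ℝ := 2 * δ ^ 2 / B ^ 2 with hc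
  have hlpos : 0 < l := by positivity
  have hcpos : 0 < c := by positivity
  have hlδc : l * δ - c = c := by field_simp [hl, hc]; ring
  have hl2 : l ^ 2 * B ^ 2 / 8 = c := by
    rw [hl, hc]; field_simp; ring
  -- basic measurability / nonneg facts
  have hXm : ∀ a s, Measurable (X a s) := fun a s => (hXadapted a s).mono (F.le s) le_rfl
  have hεm : ∀ a s, Measurable (ε a s) := fun a s => (hεprev a s).mono (F.le _) le_rfl
  have hε0 : ∀ a s ω, 0 ≤ ε a s ω := fun a s ω => by
    rcases hεval a s ω with h|h <;> simp [h]
  have hε1 : ∀ a s ω, ε a s ω ≤ 1 := fun a s ω => by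
    rcases hεval a s ω with h|h <;> simp [h]
  -- the means are in [0, B]
  have hXint : ∀ a s, Integrable (X a s) P := by
    intro a s
    refine (integrable_const B).mono' (hXm a s).aestronglyMeasurable (ae_of_all _ fun ω => ?_)
    rw [Real.norm_eq_abs, abs_of_nonneg (hXbound a s ω).1]; exact (hXbound a s ω).2
  have hμmem : ∀ a s, (∫ ω', X a s ω' ∂P) ∈ Set.Icc (0:ℝ) B := by
    intro a s
    constructor
    · exact integral_nonneg fun ω => (hXbound a s ω).1
    · calc (∫ ω', X a s ω' ∂P) ≤ ∫ _, B ∂P :=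
        integral_mono (hXint a s) (integrable_const B) fun ω => (hXbound a s ω).2
      _ = B := by simp
  -- adaptedness of S and N
  have hSN_meas : ∀ t, Measurable[F t] (S t) ∧ Measurable[F t] (N t) := by
    intro t
    constructor
    · have : S t = fun ω => ∑ s ∈ Finset.Icc 1 t, ∑ a, ε a s ω * (X a s ω - ∫ ω', X a s ω' ∂P) :=
        funext (hS t)
      rw [this]
      apply Finset.measurable_sum
      intro s hs
      apply Finset.measurable_sum
      intro a _
      have hst : s ≤ t := (Finset.mem_Icc.mp hs).2
      exact ((hεprev a s).mono (F.mono ((Nat.sub_le s 1).trans hst)) le_rfl).mul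
        (((hXadapted a s).mono (F.mono hst) le_rfl).sub measurable_const)
    · have : N t = fun ω => ∑ s ∈ Finset.Icc 1 t, ∑ a, ε a s ω := funext (hN t)
      rw [this]
      apply Finset.measurable_sum
      intro s hs
      apply Finset.measurable_sum
      intro a _
      exact (hεprev a s).mono (F.mono ((Nat.sub_le s 1).trans (Finset.mem_Icc.mp hs).2)) le_rfl
  have hSadapted : StronglyAdapted F S := fun t => ((hSN_meas t).1).stronglyMeasurable
  have hNadapted : StronglyAdapted F N := fun t => ((hSN_meas t).2).stronglyMeasurable
  -- bounds on S and N
  have hinner : ∀ s ω, |∑ a, ε a s ω * (X a s ω - ∫ ω', X a s ω' ∂P)| ≤ B := by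
    intro s ω
    calc |∑ a, ε a s ω * (X a s ω - ∫ ω', X a s ω' ∂P)|
        ≤ ∑ a, |ε a s ω * (X a s ω - ∫ ω', X a s ω' ∂P)| := Finset.abs_sum_le_sum_abs _ _
      _ ≤ ∑ a, ε a s ω * B := by
        apply Finset.sum_le_sum
        intro a _
        rw [abs_mul, abs_of_nonneg (hε0 a s ω)]
        apply mul_le_mul_of_nonneg_left _ (hε0 a s ω)
        rw [abs_le]
        constructor
        · have := (hμmem a s).2; have := (hXbound a s ω).1; linarith
        · have := (hμmem a s).1; have := (hXbound a s ω).2; linarith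
      _ = (∑ a, ε a s ω) * B := by rw [Finset.sum_mul]
      _ ≤ B := by
        rcases hεsum s ω with h|h <;> rw [h] <;> simp [hB.le]
  have hSb : ∀ t ω, |S t ω| ≤ t * B := by
    intro t ω
    rw [hS t ω]
    calc |∑ s ∈ Finset.Icc 1 t, ∑ a, ε a s ω * (X a s ω - ∫ ω', X a s ω' ∂P)|
        ≤ ∑ s ∈ Finset.Icc 1 t, |∑ a, ε a s ω * (X a s ω - ∫ ω', X a s ω' ∂P)| :=
          Finset.abs_sum_le_sum_abs _ _
      _ ≤ ∑ _s ∈ Finset.Icc 1 t, B := Finset.sum_le_sum fun s _ => hinner s ω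
      _ = t * B := by rw [Finset.sum_const, Nat.card_Icc]; simp [nsmul_eq_mul]
  have hN0 : ∀ t ω, 0 ≤ N t ω := by
    intro t ω
    rw [hN t ω]
    exact Finset.sum_nonneg fun s _ => Finset.sum_nonneg fun a _ => hε0 a s ω
  -- the stopped exponential process
  set Z : ℕ → Ω → ℝ := fun t ω =>
    exp (l * stoppedProcess S (fun ω => (φ ω : WithTop ℕ)) t ω - c * stoppedProcess N (fun ω => (φ ω : WithTop ℕ)) t ω) with hZ
  have hZpos : ∀ t ω, 0 < Z t ω := fun t ω => exp_pos _
  have hZle : ∀ t ω, Z t ω ≤ exp (l * (t * B)) := by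
    intro t ω
    apply exp_le_exp.mpr
    have h1 : stoppedProcess S (fun ω => (φ ω : WithTop ℕ)) t ω = S (min t (φ ω)) ω := rfl
    have h2 : stoppedProcess N (fun ω => (φ ω : WithTop ℕ)) t ω = N (min t (φ ω)) ω := rfl
    rw [h1, h2]
    have hs := hSb (min t (φ ω)) ω
    have hn := hN0 (min t (φ ω)) ω
    have hminle : ((min t (φ ω) : ℕ) : ℝ) ≤ (t : ℝ) := Nat.cast_le.mpr (min_le_left _ _)
    have h3 : S (min t (φ ω)) ω ≤ ((min t (φ ω) : ℕ) : ℝ) * B := (abs_le.mp hs).2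
    have h4 : ((min t (φ ω) : ℕ) : ℝ) * B ≤ (t : ℝ) * B := by
      exact mul_le_mul_of_nonneg_right hminle hB.le
    nlinarith [mul_le_mul_of_nonneg_left (h3.trans h4) hlpos.le,
      mul_nonneg hcpos.le hn]
  have hZmeas : ∀ t, Measurable[F t] (Z t) := by
    intro t
    have hs := (hSadapted.stoppedProcess_of_discrete hφ t).measurable
    have hn := (hNadapted.stoppedProcess_of_discrete hφ t).measurable
    exact ((hs.const_mul l).sub (hn.const_mul c)).exp
  have hZm : ∀ t, Measurable (Z t) := fun t => (hZmeas t).mono (F.le t) le_rfl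
  have hZint : ∀ t, Integrable (Z t) P := by
    intro t
    refine (integrable_const (exp (l * (t * B)))).mono' (hZm t).aestronglyMeasurable
      (ae_of_all _ fun ω => ?_)
    rw [Real.norm_eq_abs, abs_of_nonneg (hZpos t ω).le]
    exact hZle t ω
  -- key induction: E[Z t] ≤ 1
  have key : ∀ t, ∫ ω, Z t ω ∂P ≤ 1 := by
    intro t
    induction t with
    | zero =>
      have : ∀ ω, Z 0 ω = 1 := by
        intro ω
        have h1 : stoppedProcess S (fun ω => (φ ω : WithTop ℕ)) 0 ω = S 0 ω := by
          simp [stoppedProcess]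
        have h2 : stoppedProcess N (fun ω => (φ ω : WithTop ℕ)) 0 ω = N 0 ω := by
          simp [stoppedProcess]
        have hS0 : S 0 ω = 0 := by rw [hS]; simp
        have hN0' : N 0 ω = 0 := by rw [hN]; simp
        simp [hZ, h1, h2, hS0, hN0']
      rw [integral_congr_ae (ae_of_all _ this)]
      simp
    | succ t ih =>
      set q : R → Ω → ℝ := fun a ω => if φ ω ≤ t then 0 else ε a (t+1) ω with hq
      set W : R → Ω → ℝ := fun a ω => Z t ω * q a ω with hWdef
      set G : R → Ω → ℝ := fun a ω =>
        exp (l * (X a (t+1) ω - ∫ ω', X a (t+1) ω' ∂P)) with hG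
      have hq01 : ∀ a ω, q a ω = 0 ∨ q a ω = 1 := by
        intro a ω
        by_cases hφt : φ ω ≤ t
        · left; simp [hq, hφt]
        · simp only [hq, if_neg hφt]; exact hεval a (t+1) ω
      -- pointwise identity
      have hid : ∀ ω, Z (t+1) ω
          = (∑ a, W a ω * G a ω * exp (-c)) + (Z t ω - ∑ a, W a ω) := by
        intro ω
        by_cases hφt : φ ω ≤ t
        · have hq0 : ∀ a, q a ω = 0 := fun a => if_pos hφt
          have hmin1 : min (t+1) (φ ω) = φ ω := min_eq_right (hφt.trans t.le_succ)
          have hmin2 : min t (φ ω) = φ ω := min_eq_right hφt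
          have hZsucc : Z (t+1) ω = Z t ω := by
            simp only [hZ]
            have e1 : stoppedProcess S (fun ω => (φ ω : WithTop ℕ)) (t+1) ω = S (φ ω) ω := by
              simp [stoppedProcess_natCoe_apply, hmin1]
            have e2 : stoppedProcess N (fun ω => (φ ω : WithTop ℕ)) (t+1) ω = N (φ ω) ω := by
              simp [stoppedProcess_natCoe_apply, hmin1]
            have e3 : stoppedProcess S (fun ω => (φ ω : WithTop ℕ)) t ω = S (φ ω) ω := by
              simp [stoppedProcess_natCoe_apply, hmin2]
            have e4 : stoppedProcess N (fun ω => (φ ω : WithTop ℕ)) t ω = N (φ ω) ω := by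
              simp [stoppedProcess_natCoe_apply, hmin2]
            rw [e1, e2, e3, e4]
          simp [hZsucc, hWdef, hq0]
        · push_neg at hφt
          have hqε : ∀ a, q a ω = ε a (t+1) ω := fun a => if_neg (not_le.mpr hφt)
          have hmin1 : min (t+1) (φ ω) = t+1 := min_eq_left hφt
          have hmin2 : min t (φ ω) = t := min_eq_left hφt.le
          have e1 : stoppedProcess S (fun ω => (φ ω : WithTop ℕ)) (t+1) ω = S (t+1) ω := by
            simp [stoppedProcess_natCoe_apply, hmin1]
          have e2 : stoppedProcess N (fun ω => (φ ω : WithTop ℕ)) (t+1) ω = N (t+1) ω := by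
            simp [stoppedProcess_natCoe_apply, hmin1]
          have e3 : stoppedProcess S (fun ω => (φ ω : WithTop ℕ)) t ω = S t ω := by
            simp [stoppedProcess_natCoe_apply, hmin2]
          have e4 : stoppedProcess N (fun ω => (φ ω : WithTop ℕ)) t ω = N t ω := by
            simp [stoppedProcess_natCoe_apply, hmin2]
          have hΔS : S (t+1) ω = S t ω
              + ∑ a, ε a (t+1) ω * (X a (t+1) ω - ∫ ω', X a (t+1) ω' ∂P) := by
            rw [hS, hS, Finset.sum_Icc_succ_top (Nat.le_add_left 1 t)]
          have hΔN : N (t+1) ω = N t ω + ∑ a, ε a (t+1) ω := by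
            rw [hN, hN, Finset.sum_Icc_succ_top (Nat.le_add_left 1 t)]
          rcases hεsum (t+1) ω with h0 | h1
          · have hz := sum01_eq_zero (fun a => hεval a (t+1) ω) h0
            have hZsucc : Z (t+1) ω = Z t ω := by
              simp only [hZ]
              rw [e1, e2, e3, e4, hΔS, hΔN, h0]
              have : (∑ a, ε a (t+1) ω * (X a (t+1) ω - ∫ ω', X a (t+1) ω' ∂P)) = 0 :=
                Finset.sum_eq_zero fun a _ => by rw [hz a]; ring
              rw [this]
              ring_nf
            have hqz : ∀ a, q a ω = 0 := fun a => by rw [hqε a, hz a]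
            simp [hZsucc, hWdef, hqz]
          · obtain ⟨b, hb1, hb0⟩ := sum01_eq_one (fun a => hεval a (t+1) ω) h1
            have hsum1 : (∑ a, ε a (t+1) ω * (X a (t+1) ω - ∫ ω', X a (t+1) ω' ∂P))
                = X b (t+1) ω - ∫ ω', X b (t+1) ω' ∂P := by
              rw [Finset.sum_eq_single b (fun a _ ha => by rw [hb0 a ha]; ring)
                (fun h => absurd (Finset.mem_univ b) h), hb1, one_mul]
            have hZsucc : Z (t+1) ω = Z t ω * G b ω * exp (-c) := by
              simp only [hZ, hG]
              rw [e1, e2, e3, e4, hΔS, hΔN, h1, hsum1, ← exp_add, ← exp_add]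
              congr 1
              ring
            have hWsum : (∑ a, W a ω) = Z t ω := by
              simp only [hWdef]
              rw [Finset.sum_eq_single b
                (fun a _ ha => by rw [hqε a, hb0 a ha]; ring)
                (fun h => absurd (Finset.mem_univ b) h), hqε b, hb1, mul_one]
            have hWGsum : (∑ a, W a ω * G a ω * exp (-c))
                = Z t ω * G b ω * exp (-c) := by
              rw [Finset.sum_eq_single b
                (fun a _ ha => by simp only [hWdef]; rw [hqε a, hb0 a ha]; ring)
                (fun h => absurd (Finset.mem_univ b) h)]
              simp only [hWdef]
              rw [hqε b, hb1, mul_one]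
            rw [hZsucc, hWGsum, hWsum]
            ring
      -- measurability and integrability of the pieces
      have hεt1 : ∀ a, Measurable[F t] (ε a (t+1)) := by
        intro a
        have := hεprev a (t+1)
        simpa using this
      have hqmeas : ∀ a, Measurable[F t] (q a) := by
        intro a
        exact Measurable.ite (by simpa using hφ t) measurable_const (hεt1 a)
      have hWmeasF : ∀ a, Measurable[F t] (W a) := fun a => (hZmeas t).mul (hqmeas a)
      have hWm : ∀ a, Measurable (W a) := fun a => (hWmeasF a).mono (F.le t) le_rfl
      have hq0' : ∀ a ω, 0 ≤ q a ω := fun a ω => by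
        rcases hq01 a ω with h|h <;> simp [h]
      have hq1' : ∀ a ω, q a ω ≤ 1 := fun a ω => by
        rcases hq01 a ω with h|h <;> simp [h]
      have hW0 : ∀ a ω, 0 ≤ W a ω := fun a ω =>
        mul_nonneg (hZpos t ω).le (hq0' a ω)
      have hWle : ∀ a ω, W a ω ≤ exp (l * (t * B)) := by
        intro a ω
        calc W a ω ≤ Z t ω * 1 := mul_le_mul_of_nonneg_left (hq1' a ω) (hZpos t ω).le
        _ = Z t ω := mul_one _
        _ ≤ _ := hZle t ω
      have hWint : ∀ a, Integrable (W a) P := by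
        intro a
        refine (integrable_const (exp (l * (t * B)))).mono'
          (hWm a).aestronglyMeasurable (ae_of_all _ fun ω => ?_)
        rw [Real.norm_eq_abs, abs_of_nonneg (hW0 a ω)]
        exact hWle a ω
      have hGm : ∀ a, Measurable (G a) :=
        fun a => (((hXm a (t+1)).sub measurable_const).const_mul l).exp
      have hGpos : ∀ a ω, 0 < G a ω := fun a ω => exp_pos _
      have hGle : ∀ a ω, G a ω ≤ exp (l * B) := by
        intro a ω
        apply exp_le_exp.mpr
        apply mul_le_mul_of_nonneg_left _ hlpos.le
        have := (hμmem a (t+1)).1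
        have := (hXbound a (t+1) ω).2
        linarith
      have hGint : ∀ a, Integrable (G a) P := by
        intro a
        refine (integrable_const (exp (l * B))).mono'
          (hGm a).aestronglyMeasurable (ae_of_all _ fun ω => ?_)
        rw [Real.norm_eq_abs, abs_of_nonneg (hGpos a ω).le]
        exact hGle a ω
      -- independence and factorization
      have hfact : ∀ a, ∫ ω, W a ω * G a ω ∂P = (∫ ω, W a ω ∂P) * ∫ ω, G a ω ∂P := by
        intro a
        have h1 : Indep (MeasurableSpace.comap (X a (t+1))
            (inferInstance : MeasurableSpace ℝ)) (F t) P :=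
          hXindep a (t+1) t (Nat.lt_succ_self t)
        have hle1 : MeasurableSpace.comap (G a) (inferInstance : MeasurableSpace ℝ)
            ≤ MeasurableSpace.comap (X a (t+1)) (inferInstance : MeasurableSpace ℝ) := by
          have : G a = (fun x : ℝ => exp (l * (x - ∫ ω', X a (t+1) ω' ∂P))) ∘ X a (t+1) := rfl
          rw [this, ← MeasurableSpace.comap_comp]
          exact MeasurableSpace.comap_mono
            (Measurable.comap_le (((measurable_id.sub measurable_const).const_mul l).exp))
        have hle2 : MeasurableSpace.comap (W a) (inferInstance : MeasurableSpace ℝ) ≤ F t :=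
          (hWmeasF a).comap_le
        have h2 : IndepFun (G a) (W a) P :=
          Kernel.indep_of_indep_of_le_right (Kernel.indep_of_indep_of_le_left h1 hle1) hle2
        have := h2.integral_fun_mul_eq_mul_integral (hGint a).aestronglyMeasurable (hWint a).aestronglyMeasurable
        calc ∫ ω, W a ω * G a ω ∂P
            = ∫ ω, G a ω * W a ω ∂P := by congr 1; ext ω; ring
          _ = (∫ ω, G a ω ∂P) * ∫ ω, W a ω ∂P := this
          _ = (∫ ω, W a ω ∂P) * ∫ ω, G a ω ∂P := mul_comm _ _
      have hGbd : ∀ a, ∫ ω, G a ω ∂P ≤ exp c := by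
        intro a
        have := hoeffding_mgf P hB (hXm a (t+1)) (fun ω => hXbound a (t+1) ω) l
        rwa [hl2] at this
      -- integrate the identity
      have hWGint : ∀ a, Integrable (fun ω => W a ω * G a ω) P := by
        intro a
        refine (integrable_const (exp (l * (t * B)) * exp (l * B))).mono'
          ((hWm a).mul (hGm a)).aestronglyMeasurable (ae_of_all _ fun ω => ?_)
        rw [Real.norm_eq_abs, abs_of_nonneg (mul_nonneg (hW0 a ω) (hGpos a ω).le)]
        exact mul_le_mul (hWle a ω) (hGle a ω) (hGpos a ω).le (exp_nonneg _)
      have hint1 : Integrable (fun ω => ∑ a, W a ω * G a ω * exp (-c)) P :=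
        integrable_finset_sum _ fun a _ => (hWGint a).mul_const _
      have hint2 : Integrable (fun ω => ∑ a, W a ω) P :=
        integrable_finset_sum _ fun a _ => hWint a
      have hZsum : ∫ ω, Z (t+1) ω ∂P
          = (∑ a, (∫ ω, W a ω ∂P) * (∫ ω, G a ω ∂P) * exp (-c))
            + ((∫ ω, Z t ω ∂P) - ∑ a, ∫ ω, W a ω ∂P) := by
        have hint3 : Integrable (fun ω => Z t ω - ∑ a, W a ω) P := (hZint t).sub hint2
        rw [integral_congr_ae (ae_of_all _ hid),
          integral_add hint1 hint3,
          integral_finset_sum _ (fun a _ => (hWGint a).mul_const _),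
          integral_sub (hZint t) hint2,
          integral_finset_sum _ (fun a _ => hWint a)]
        congr 1
        apply Finset.sum_congr rfl
        intro a _
        rw [integral_mul_const, hfact a]
      rw [hZsum]
      have hterm : ∀ a, (∫ ω, W a ω ∂P) * (∫ ω, G a ω ∂P) * exp (-c)
          ≤ ∫ ω, W a ω ∂P := by
        intro a
        have hWi0 : 0 ≤ ∫ ω, W a ω ∂P := integral_nonneg fun ω => hW0 a ω
        have h1 : (∫ ω, G a ω ∂P) * exp (-c) ≤ 1 := by
          calc (∫ ω, G a ω ∂P) * exp (-c) ≤ exp c * exp (-c) :=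
            mul_le_mul_of_nonneg_right (hGbd a) (exp_nonneg _)
          _ = 1 := by rw [← exp_add]; simp
        calc (∫ ω, W a ω ∂P) * (∫ ω, G a ω ∂P) * exp (-c)
            = (∫ ω, W a ω ∂P) * ((∫ ω, G a ω ∂P) * exp (-c)) := by ring
        _ ≤ (∫ ω, W a ω ∂P) * 1 := mul_le_mul_of_nonneg_left h1 hWi0
        _ = ∫ ω, W a ω ∂P := mul_one _
      calc (∑ a, (∫ ω, W a ω ∂P) * (∫ ω, G a ω ∂P) * exp (-c))
            + ((∫ ω, Z t ω ∂P) - ∑ a, ∫ ω, W a ω ∂P)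
          ≤ (∑ a, ∫ ω, W a ω ∂P) + ((∫ ω, Z t ω ∂P) - ∑ a, ∫ ω, W a ω ∂P) := by
            apply add_le_add_left
            exact Finset.sum_le_sum fun a _ => hterm a
        _ = ∫ ω, Z t ω ∂P := by ring
        _ ≤ 1 := ih
  -- conclusion via Markov
  have hsub : {ω | N (φ ω) ω * δ ≤ S (φ ω) ω ∧ φ ω ≤ T}
      ⊆ {ω | exp (c * n) ≤ Z (T+1) ω} := by
    rintro ω ⟨h1, h2⟩
    have hmin : min (T+1) (φ ω) = φ ω := min_eq_right (h2.trans (Nat.le_succ T))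
    have hZω : Z (T+1) ω = exp (l * S (φ ω) ω - c * N (φ ω) ω) := by
      simp only [hZ]
      have e1 : stoppedProcess S (fun ω => (φ ω : WithTop ℕ)) (T+1) ω = S (φ ω) ω := by simp [stoppedProcess_natCoe_apply, hmin]
      have e2 : stoppedProcess N (fun ω => (φ ω : WithTop ℕ)) (T+1) ω = N (φ ω) ω := by simp [stoppedProcess_natCoe_apply, hmin]
      rw [e1, e2]
    rw [Set.mem_setOf_eq, hZω]
    apply exp_le_exp.mpr
    have hNn := hφN ω h2
    have h3 : l * (N (φ ω) ω * δ) ≤ l * S (φ ω) ω :=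
      mul_le_mul_of_nonneg_left h1 hlpos.le
    nlinarith [hlδc, hcpos.le]
  have hmarkov := mul_meas_ge_le_integral_of_nonneg
    (ae_of_all P fun ω => (hZpos (T+1) ω).le) (hZint (T+1)) (exp (c * n))
  have hPA : (P {x | exp (c * n) ≤ Z (T+1) x}).toReal ≤ exp (-(c * n)) := by
    have he := exp_pos (c * (n:ℝ))
    have hint := hmarkov.trans (key (T+1))
    rw [exp_neg, inv_eq_one_div, le_div_iff₀ he]
    rw [measureReal_def] at hint
    linarith [hint, mul_comm (exp (c * (n:ℝ))) ((P {x | exp (c * (n:ℝ)) ≤ Z (T+1) x}).toReal)]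
  calc P {ω | N (φ ω) ω * δ ≤ S (φ ω) ω ∧ φ ω ≤ T}
      ≤ P {x | exp (c * n) ≤ Z (T+1) x} := measure_mono hsub
    _ ≤ ENNReal.ofReal (exp (-2 * n * δ ^ 2 / B ^ 2)) := by
      have harg : (-2 * (n:ℝ) * δ ^ 2 / B ^ 2) = -(c * n) := by rw [hc]; ring
      rw [harg]
      exact (ENNReal.le_ofReal_iff_toReal_le (measure_ne_top P _) (exp_nonneg _)).mpr hPA
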